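/- Change of variables for abstract iterated integrals: for group-like series s, t ∈ G(A) and n₁ ≥ 0, n₂ ≥ 1, the pairing of the product series st against the half-shuffle element satisfies (st)^(1_{n₁} ≻ 1_{n₂}) − ŝ(1_{n₁} ≻ 1_{n₂}) = Σ_{k₁=0}^{n₁} Σ_{k₂=0}^{n₂−1} ρ_{k₂,n₁−k₁} · conc( ŝ(1_{k₁} *′ 1_{k₂}) ⊗ t̂(1_{n₁−k₁} ≻ 1_{n₂−k₂}) ), where ρ_{k₂,n₁−k₁} ∈ S_{n₁+n₂} swaps the blocks (k₁+1,…,k₁+k₂) and (k₁+k₂+1,…,n₁+k₂) in (1,…,n₁+n₂). -/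

import Mathlib

def shuffle {A : Type*} : List A → List A → Multiset (List A)
  | [], w => {w}
  | u, [] => {u}
  | a :: u, b :: v => (shuffle u (b :: v)).map (a :: ·) + (shuffle (a :: u) v).map (b :: ·)
termination_by u v => u.length + v.length
decreasing_by all_goals simp +arith +decide

/-- The right half-shuffle on words: `u ≻ (v·a) = sh(u ⊗ v)·a`, `u ≻ e = 0`. -/
def succW {A : Type*} (u v : List A) : Multiset (List A) :=
  match v.getLast? with
  | none => 0
  | some a => (shuffle u v.dropLast).map (fun w => w ++ [a])

/-- The MR product `σ *′ ρ = sh(σ ⊗ ρ̄)` on permutation words, `ρ̄(i) = |σ| + ρ(i)`;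
`1ₖ` is the word `List.range k`. -/
def mrW (u v : List ℕ) : Multiset (List ℕ) := shuffle u (v.map (· + u.length))

/-- The half-shuffle of identity permutations: `1_{n₁} ≻ 1_{n₂} = σ ≻ ρ̄` on
permutation words. -/
def succPermW (n₁ n₂ : ℕ) : Multiset (List ℕ) :=
  succW (List.range n₁) ((List.range n₂).map (· + n₁))

/-- The action `σ·(a₁⋯aₙ) = a_{σ1}⋯a_{σn}` of a permutation word on words (0-indexed). -/
def applyW {A : Type*} [Inhabited A] (σ : List ℕ) (w : List A) : List A :=
  σ.map fun i => w.getD i default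

/-- The inverse of a permutation word. -/
def invWord (ρ : List ℕ) : List ℕ := (List.range ρ.length).map fun i => ρ.idxOf i

/-- The adjoint action of a permutation word `ρ` on a homogeneous series:
`ρ · (Σ_w c_w w) = Σ_w c_w (ρ·w)`, i.e. the coefficient at `w` is `c_{ρ⁻¹·w}`. -/
def actSeries {A : Type*} [Inhabited A] {K : Type*} [CommRing K] [Algebra ℚ K]
    (ρ : List ℕ) (s : List A → K) : List A → K :=
  fun w => if w.length = ρ.length then s (applyW (invWord ρ) w) else 0

def GroupLikeSeries {A : Type*} {K : Type*} [CommRing K] [Algebra ℚ K] (s : List A → K) : Prop :=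
  s [] = 1 ∧ ∀ u v : List A, ((shuffle u v).map s).sum = s u * s v

/-- `ŝ` evaluated on a multiset (formal sum) of permutation words:
`ŝ(σ) = Σ_{w} (s, σ·w) w`. -/
def shatM {A : Type*} [Inhabited A] {K : Type*} [CommRing K] [Algebra ℚ K]
    (s : List A → K) (M : Multiset (List ℕ)) : List A → K :=
  fun w => (M.map fun σ => if w.length = σ.length then s (applyW σ w) else 0).sum

/-- The concatenation product of series. -/
def concSeries {A : Type*} {K : Type*} [CommRing K] [Algebra ℚ K]
    (s t : List A → K) : List A → K :=
  fun w => ∑ k ∈ Finset.range (w.length + 1), s (w.take k) * t (w.drop k)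

/-- `ρ_{k₂,j} ∈ S_{n}`: the permutation word exchanging the blocks
`(k₁+1,…,k₁+k₂)` and `(k₁+k₂+1,…,k₁+k₂+j)` inside `(1,…,n)`. -/
def blockSwap (k₁ k₂ j n : ℕ) : List ℕ :=
  List.range k₁ ++ List.range' (k₁ + k₂) j ++ List.range' k₁ k₂ ++
    List.range' (k₁ + k₂ + j) (n - (k₁ + k₂ + j))

theorem shuffle_nil_left {A : Type*} (v : List A) : shuffle [] v = {v} := by
  rw [shuffle]

theorem shuffle_nil_right {A : Type*} (u : List A) : shuffle u [] = {u} := by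
  cases u with
  | nil => rw [shuffle]
  | cons a u => rw [shuffle]; simp

theorem shuffle_cons_cons {A : Type*} (a b : A) (u v : List A) :
    shuffle (a :: u) (b :: v) =
      (shuffle u (b :: v)).map (a :: ·) + (shuffle (a :: u) v).map (b :: ·) := by
  rw [shuffle]

theorem sum_range_cons_take {A M : Type*} [AddCommMonoid M] (F : List A → List A → M)
    (a : A) (x : List A) (N : ℕ) :
    ∑ k ∈ Finset.range (N + 1), F ((a :: x).take k) ((a :: x).drop k)
      = F [] (a :: x) + ∑ k ∈ Finset.range N, F (a :: x.take k) (x.drop k) := by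
  rw [Finset.sum_range_succ']
  simp only [List.take_succ_cons, List.drop_succ_cons, List.take_zero, List.drop_zero]
  rw [add_comm]

theorem shuffle_split {A : Type*} {M : Type*} [AddCommMonoid M] :
    ∀ (u v : List A) (F : List A → List A → M),
    ((shuffle u v).map (fun x => ∑ k ∈ Finset.range (u.length + v.length + 1),
        F (x.take k) (x.drop k))).sum =
    ∑ k₁ ∈ Finset.range (u.length + 1), ∑ k₂ ∈ Finset.range (v.length + 1),
      ((shuffle (u.take k₁) (v.take k₂)).map (fun y =>
        ((shuffle (u.drop k₁) (v.drop k₂)).map (fun z => F y z)).sum)).sum := by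
  intro u v
  induction u, v using shuffle.induct with
  | case1 w =>
    intro F
    simp [shuffle_nil_left, Finset.sum_range_one]
  | case2 u h =>
    intro F
    simp [shuffle_nil_right, Finset.sum_range_one]
  | case3 a u b v ih1 ih2 =>
    intro F
    have h1 := ih1 (fun y z => F (a :: y) z)
    have h2 := ih2 (fun y z => F (b :: y) z)
    simp only [List.length_cons] at h1 h2 ⊢
    rw [shuffle_cons_cons, Multiset.map_add, Multiset.sum_add, Multiset.map_map, Multiset.map_map]
    have e1 : u.length + 1 + (v.length + 1) = u.length + (v.length + 1) + 1 := by omega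
    simp only [Function.comp_def, e1, sum_range_cons_take]
    have e2 : u.length + 1 + v.length = u.length + v.length + 1 := by omega
    simp only [e2, sum_range_cons_take, Multiset.sum_map_add]
    simp only [e2] at h2
    simp only [show u.length + v.length + 1 = u.length + (v.length + 1) from by omega] at h2
    rw [h1, h2]
    simp only [Finset.sum_range_succ', List.take_succ_cons, List.drop_succ_cons, List.take_zero,
      List.drop_zero, shuffle_cons_cons, shuffle_nil_left, shuffle_nil_right, Multiset.map_add,
      Multiset.sum_add, Multiset.map_map, Multiset.map_singleton, Multiset.sum_singleton,
      Function.comp_def, Finset.sum_add_distrib]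
    abel

theorem mem_shuffle_perm {A : Type*} : ∀ (u v x : List A), x ∈ shuffle u v → x.Perm (u ++ v) := by
  intro u v
  induction u, v using shuffle.induct with
  | case1 w => intro x hx; rw [shuffle_nil_left] at hx; simp at hx; simp [hx]
  | case2 u h => intro x hx; rw [shuffle_nil_right] at hx; simp at hx; simp [hx]
  | case3 a u b v ih1 ih2 =>
    intro x hx
    rw [shuffle_cons_cons] at hx
    simp only [Multiset.mem_add, Multiset.mem_map] at hx
    rcases hx with ⟨y, hy, rfl⟩ | ⟨y, hy, rfl⟩
    · exact (ih1 y hy).cons a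
    · refine ((ih2 y hy).cons b).trans ?_
      exact ((List.Perm.cons a List.perm_middle).trans (List.Perm.swap b a _)).symm

theorem length_of_mem_shuffle {A : Type*} {u v x : List A} (hx : x ∈ shuffle u v) :
    x.length = u.length + v.length := by
  simpa using (mem_shuffle_perm u v x hx).length_eq

theorem shuffle_map {A B : Type*} (f : A → B) :
    ∀ (u v : List A), (shuffle u v).map (List.map f) = shuffle (u.map f) (v.map f) := by
  intro u v
  induction u, v using shuffle.induct with
  | case1 w => simp [shuffle_nil_left]
  | case2 u h => simp [shuffle_nil_right]
  | case3 a u b v ih1 ih2 =>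
    rw [shuffle_cons_cons, List.map_cons, List.map_cons, shuffle_cons_cons, Multiset.map_add]
    simp only [List.map_cons] at ih1 ih2
    rw [← ih1, ← ih2]
    simp only [Multiset.map_map, Function.comp_def, List.map_cons]

theorem indexOf_range' : ∀ (b a i : ℕ), a ≤ i → i < a + b → (List.range' a b).idxOf i = i - a := by
  intro b
  induction b with
  | zero => intro a i h1 h2; omega
  | succ b ih =>
    intro a i h1 h2
    rw [List.range'_succ]
    rcases eq_or_lt_of_le h1 with rfl | h
    · simp
    · rw [List.idxOf_cons_ne _ (by omega), ih (a+1) i h (by omega)]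
      omega

theorem map_getD_range' {A : Type*} (w : List A) (d : A) (a b : ℕ) (h : a + b ≤ w.length) :
    (List.range' a b).map (fun i => w.getD i d) = (w.drop a).take b := by
  apply List.ext_getElem
  · simp; omega
  intro i h1 h2
  simp only [List.getElem_map, List.getElem_range'_1, List.getElem_take, List.getElem_drop]
  rw [List.getD_eq_getElem w d (by simp at h1; omega)]

theorem length_blockSwap (k₁ k₂ j n : ℕ) (h : k₁ + k₂ + j ≤ n) :
    (blockSwap k₁ k₂ j n).length = n := by
  simp [blockSwap]; omega

theorem indexOf_blockSwap (k₁ k₂ j n : ℕ) (h : k₁ + k₂ + j ≤ n) (i : ℕ) (hi : i < n) :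
    (blockSwap k₁ k₂ j n).idxOf i =
      if i < k₁ then i else if i < k₁ + k₂ then i + j
      else if i < k₁ + k₂ + j then i - k₂ else i := by
  unfold blockSwap
  by_cases c1 : i < k₁
  · have m1 : i ∈ List.range k₁ ++ List.range' (k₁ + k₂) j := by
      simp; omega
    have m2 : i ∈ List.range k₁ ++ List.range' (k₁ + k₂) j ++ List.range' k₁ k₂ := by
      simp only [List.mem_append]; exact Or.inl (List.mem_append.1 m1)
    rw [List.idxOf_append_of_mem m2, List.idxOf_append_of_mem m1,
      List.idxOf_append_of_mem (by simp; omega), List.range_eq_range',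
      indexOf_range' k₁ 0 i (by omega) (by omega), if_pos c1]
    omega
  by_cases c2 : i < k₁ + k₂
  · have m1 : i ∉ List.range k₁ ++ List.range' (k₁ + k₂) j := by
      simp; omega
    have m2 : i ∈ List.range k₁ ++ List.range' (k₁ + k₂) j ++ List.range' k₁ k₂ := by
      simp; omega
    rw [List.idxOf_append_of_mem m2, List.idxOf_append_of_notMem m1,
      indexOf_range' k₂ k₁ i (by omega) (by omega), if_neg c1, if_pos c2]
    simp; omega
  by_cases c3 : i < k₁ + k₂ + j
  · have m1 : i ∉ List.range k₁ := by simp; omega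
    have m2 : i ∈ List.range k₁ ++ List.range' (k₁ + k₂) j := by
      simp; omega
    have m3 : i ∈ List.range k₁ ++ List.range' (k₁ + k₂) j ++ List.range' k₁ k₂ := by
      simp only [List.mem_append]; exact Or.inl (List.mem_append.1 m2)
    rw [List.idxOf_append_of_mem m3, List.idxOf_append_of_mem m2,
      List.idxOf_append_of_notMem m1,
      indexOf_range' j (k₁ + k₂) i (by omega) (by omega), if_neg c1, if_neg c2, if_pos c3]
    simp; omega
  · have m1 : i ∉ List.range k₁ ++ List.range' (k₁ + k₂) j ++ List.range' k₁ k₂ := by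
      simp; omega
    rw [List.idxOf_append_of_notMem m1,
      indexOf_range' (n - (k₁ + k₂ + j)) (k₁ + k₂ + j) i (by omega) (by omega),
      if_neg c1, if_neg c2, if_neg c3]
    simp; omega

theorem getElem_blockSwap (k₁ k₂ j n : ℕ) (h : k₁ + k₂ + j ≤ n) (i : ℕ) (hi : i < n) :
    (blockSwap k₁ k₂ j n)[i]'(by rw [length_blockSwap k₁ k₂ j n h]; exact hi) =
      if i < k₁ then i else if i < k₁ + j then i + k₂
      else if i < k₁ + j + k₂ then i - j else i := by
  unfold blockSwap
  by_cases c1 : i < k₁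
  · rw [List.getElem_append_left (by simp; omega), List.getElem_append_left (by simp; omega),
      List.getElem_append_left (by simp; omega), List.getElem_range, if_pos c1]
  by_cases c2 : i < k₁ + j
  · rw [List.getElem_append_left (by simp; omega), List.getElem_append_left (by simp; omega),
      List.getElem_append_right (by simp; omega), if_neg c1, if_pos c2]
    simp [List.getElem_range'_1]
    omega
  by_cases c3 : i < k₁ + j + k₂
  · rw [List.getElem_append_left (by simp; omega), List.getElem_append_right (by simp; omega),
      if_neg c1, if_neg c2, if_pos c3]
    simp [List.getElem_range'_1]
    omega
  · rw [List.getElem_append_right (by simp; omega), if_neg c1, if_neg c2, if_neg c3]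
    simp [List.getElem_range'_1]
    omega

theorem invWord_blockSwap (k₁ k₂ j n : ℕ) (h : k₁ + k₂ + j ≤ n) :
    invWord (blockSwap k₁ k₂ j n) = blockSwap k₁ j k₂ n := by
  unfold invWord
  rw [length_blockSwap k₁ k₂ j n h]
  apply List.ext_getElem
  · rw [List.length_map, List.length_range, length_blockSwap k₁ j k₂ n (by omega)]
  intro i h1 h2
  rw [List.getElem_map, List.getElem_range,
    indexOf_blockSwap k₁ k₂ j n h i (by simpa using h1),
    getElem_blockSwap k₁ j k₂ n (by omega) i (by simpa using h1)]

theorem applyW_blockSwap {A : Type*} [Inhabited A] (k₁ k₂ j n : ℕ) (w : List A)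
    (h : k₁ + k₂ + j ≤ n) (hw : w.length = n) :
    applyW (blockSwap k₁ k₂ j n) w =
      w.take k₁ ++ ((w.drop (k₁ + k₂)).take j ++ ((w.drop k₁).take k₂ ++ w.drop (k₁ + k₂ + j))) := by
  unfold applyW blockSwap
  rw [List.append_assoc, List.append_assoc, List.map_append, List.map_append, List.map_append,
    List.range_eq_range', map_getD_range' w default 0 k₁ (by omega),
    map_getD_range' w default (k₁ + k₂) j (by omega),
    map_getD_range' w default k₁ k₂ (by omega),
    map_getD_range' w default (k₁ + k₂ + j) (n - (k₁ + k₂ + j)) (by omega),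
    List.drop_zero]
  rw [List.take_of_length_le (l := w.drop (k₁ + k₂ + j)) (by simp [hw])]


theorem getD_take {A : Type*} (w : List A) (d : A) (a e : ℕ) (he : e < a) :
    (w.take a).getD e d = w.getD e d := by
  simp [List.getD_eq_getElem?_getD, List.getElem?_take, he]

theorem getD_drop {A : Type*} (w : List A) (d : A) (a e : ℕ) :
    (w.drop a).getD e d = w.getD (a + e) d := by
  simp [List.getD_eq_getElem?_getD, List.getElem?_drop]

theorem getD_append_left {A : Type*} (p q : List A) (d : A) (e : ℕ) (he : e < p.length) :
    (p ++ q).getD e d = p.getD e d := by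
  simp [List.getD_eq_getElem?_getD, List.getElem?_append_left, he]

theorem getD_append_right {A : Type*} (p q : List A) (d : A) (e : ℕ) (he : p.length ≤ e) :
    (p ++ q).getD e d = q.getD (e - p.length) d := by
  simp [List.getD_eq_getElem?_getD, List.getElem?_append_right, he]

theorem applyW_append {A : Type*} [Inhabited A] (σ τ : List ℕ) (w : List A) :
    applyW (σ ++ τ) w = applyW σ w ++ applyW τ w := by
  simp [applyW]

theorem length_applyW {A : Type*} [Inhabited A] (σ : List ℕ) (w : List A) :
    (applyW σ w).length = σ.length := by
  simp [applyW]

theorem applyW_congr {A : Type*} [Inhabited A] (σ : List ℕ) (φ : ℕ → ℕ) (w p : List A)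
    (h : ∀ e ∈ σ, p.getD e default = w.getD (φ e) default) :
    applyW σ p = applyW (σ.map φ) w := by
  unfold applyW
  rw [List.map_map]
  exact List.map_congr_left h

theorem succPermW_eq (n₁ m : ℕ) :
    succPermW n₁ (m + 1) = (shuffle (List.range n₁) ((List.range m).map (· + n₁))).map
      (fun x => x ++ [n₁ + m]) := by
  unfold succPermW succW
  rw [List.range_succ, List.map_append]
  simp only [List.map_cons, List.map_nil, List.getLast?_concat, List.dropLast_concat]
  rw [show m + n₁ = n₁ + m by omega]

theorem shatM_eq_zero {A : Type*} [Inhabited A] {K : Type*} [CommRing K] [Algebra ℚ K]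
    (s : List A → K) (M : Multiset (List ℕ)) (w : List A) (L : ℕ)
    (hM : ∀ σ ∈ M, σ.length = L) (hw : w.length ≠ L) : shatM s M w = 0 := by
  unfold shatM
  apply Multiset.sum_eq_zero
  intro x hx
  rw [Multiset.mem_map] at hx
  obtain ⟨σ, hσ, rfl⟩ := hx
  rw [if_neg (by rw [hM σ hσ]; exact hw)]

theorem length_mem_mrW {k₁ k₂ : ℕ} {σ : List ℕ}
    (h : σ ∈ mrW (List.range k₁) (List.range k₂)) : σ.length = k₁ + k₂ := by
  unfold mrW at h
  have := length_of_mem_shuffle h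
  simpa using this

theorem length_mem_succPermW {n₁ m : ℕ} {σ : List ℕ}
    (h : σ ∈ succPermW n₁ (m + 1)) : σ.length = n₁ + m + 1 := by
  rw [succPermW_eq] at h
  rw [Multiset.mem_map] at h
  obtain ⟨x, hx, rfl⟩ := h
  have := length_of_mem_shuffle hx
  simp at this ⊢
  omega

theorem range_drop' (n k : ℕ) : (List.range n).drop k = List.range' k (n - k) := by
  apply List.ext_getElem
  · simp
  intro i h1 h2
  simp [List.getElem_range'_1]


theorem lhs_eq {A : Type*} [Inhabited A] {K : Type*} [CommRing K] [Algebra ℚ K]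
    (s t : List A → K) (ht1 : t [] = 1) (n₁ m : ℕ) (w : List A)
    (hw : w.length = n₁ + m + 1) :
    shatM (concSeries s t) (succPermW n₁ (m + 1)) w - shatM s (succPermW n₁ (m + 1)) w =
      ∑ k₁ ∈ Finset.range (n₁ + 1), ∑ k₂ ∈ Finset.range (m + 1),
        ((shuffle ((List.range n₁).take k₁) (((List.range m).map (· + n₁)).take k₂)).map
          (fun y => s (applyW y w))).sum *
        ((shuffle ((List.range n₁).drop k₁) (((List.range m).map (· + n₁)).drop k₂)).map
          (fun z => t (applyW z w ++ [w.getD (n₁ + m) default]))).sum := by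
  have key : ∀ f : List A → K,
      shatM f (succPermW n₁ (m + 1)) w =
        ((shuffle (List.range n₁) ((List.range m).map (· + n₁))).map
          (fun x => f (applyW x w ++ [w.getD (n₁ + m) default]))).sum := by
    intro f
    rw [succPermW_eq]
    unfold shatM
    rw [Multiset.map_map]
    apply congrArg
    apply Multiset.map_congr rfl
    intro x hx
    have hl : x.length = n₁ + m := by simpa using length_of_mem_shuffle hx
    simp only [Function.comp_apply]
    rw [if_pos (by simp [hl, hw]), applyW_append]
    rfl
  rw [key, key, ← Multiset.sum_map_sub]
  have key2 : ∀ x ∈ shuffle (List.range n₁) ((List.range m).map (· + n₁)),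
      concSeries s t (applyW x w ++ [w.getD (n₁ + m) default]) -
        s (applyW x w ++ [w.getD (n₁ + m) default])
      = ∑ k ∈ Finset.range (n₁ + m + 1),
          s (applyW (x.take k) w) * t (applyW (x.drop k) w ++ [w.getD (n₁ + m) default]) := by
    intro x hx
    have hl : x.length = n₁ + m := by simpa using length_of_mem_shuffle hx
    have hy : (applyW x w).length = n₁ + m := by rw [length_applyW, hl]
    rw [concSeries]
    have hylen : (applyW x w ++ [w.getD (n₁ + m) default]).length = n₁ + m + 1 := by
      simp [hy]
    rw [hylen, Finset.sum_range_succ,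
      List.take_of_length_le (by rw [hylen]), List.drop_eq_nil_of_le (by rw [hylen]), ht1,
      mul_one, add_sub_cancel_right]
    apply Finset.sum_congr rfl
    intro k hk
    rw [Finset.mem_range] at hk
    rw [List.take_append_of_le_length (by omega), List.drop_append_of_le_length (by omega)]
    unfold applyW
    rw [← List.map_take, ← List.map_drop]
  rw [Multiset.map_congr rfl key2]
  have SP := shuffle_split (List.range n₁) ((List.range m).map (· + n₁))
      (fun p q => s (applyW p w) * t (applyW q w ++ [w.getD (n₁ + m) default]))
  simp only [List.length_range, List.length_map] at SP
  rw [SP]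
  simp only [Multiset.sum_map_mul_left, Multiset.sum_map_mul_right]


theorem g_eq {A : Type*} [Inhabited A] {K : Type*} [CommRing K] [Algebra ℚ K]
    (s : List A → K) (n₁ m k₁ k₂ : ℕ) (hk₁ : k₁ ≤ n₁) (hk₂ : k₂ ≤ m) (w : List A)
    (hw : w.length = n₁ + m + 1) :
    shatM s (mrW (List.range k₁) (List.range k₂)) (w.take k₁ ++ (w.drop n₁).take k₂) =
      ((shuffle ((List.range n₁).take k₁) (((List.range m).map (· + n₁)).take k₂)).map
        (fun y => s (applyW y w))).sum := by
  set φ : ℕ → ℕ := fun e => if e < k₁ then e else e + (n₁ - k₁) with hφ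
  have hPlen : (w.take k₁ ++ (w.drop n₁).take k₂).length = k₁ + k₂ := by
    simp; omega
  have hlist1 : (List.range k₁).map φ = (List.range n₁).take k₁ := by
    apply List.ext_getElem
    · simp; omega
    intro i h1 h2
    simp only [List.getElem_map, List.getElem_range, List.getElem_take]
    simp only [List.length_map, List.length_range] at h1
    rw [hφ]
    simp only []
    rw [if_pos h1]
  have hlist2 : ((List.range k₂).map (· + k₁)).map φ = ((List.range m).map (· + n₁)).take k₂ := by
    apply List.ext_getElem
    · simp; omega
    intro i h1 h2
    simp only [List.getElem_map, List.getElem_range, List.getElem_take]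
    rw [hφ]
    simp only [List.length_map, List.length_range] at h1
    simp only []
    rw [if_neg (by omega)]
    omega
  unfold shatM mrW
  simp only [List.length_range]
  rw [show ((shuffle ((List.range n₁).take k₁) (((List.range m).map (· + n₁)).take k₂)) =
      (shuffle (List.range k₁) ((List.range k₂).map (· + k₁))).map (List.map φ)) from by
    rw [shuffle_map, hlist1, hlist2]]
  rw [Multiset.map_map]
  apply congrArg
  apply Multiset.map_congr rfl
  intro σ hσ
  have hσl : σ.length = k₁ + k₂ := by simpa using length_of_mem_shuffle hσ
  rw [if_pos (by rw [hPlen, hσl])]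
  simp only [Function.comp_apply]
  congr 1
  rw [applyW_congr σ φ w (w.take k₁ ++ (w.drop n₁).take k₂)]
  intro e he
  have hmem : e ∈ List.range k₁ ++ (List.range k₂).map (· + k₁) :=
    ((mem_shuffle_perm _ _ σ hσ).mem_iff).1 he
  simp only [List.mem_append, List.mem_range, List.mem_map] at hmem
  by_cases hc : e < k₁
  · rw [getD_append_left _ _ _ _ (by simp; omega), getD_take _ _ _ _ hc, hφ]
    simp only []
    rw [if_pos hc]
  · have he2 : e < k₁ + k₂ := by
      rcases hmem with h | ⟨i, hi, rfl⟩
      · omega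
      · omega
    rw [getD_append_right _ _ _ _ (by simp; omega), hφ]
    simp only []
    rw [if_neg hc]
    have : (w.take k₁).length = k₁ := by simp; omega
    rw [this, getD_take _ _ _ _ (by omega), getD_drop]
    congr 1
    omega


theorem h_eq {A : Type*} [Inhabited A] {K : Type*} [CommRing K] [Algebra ℚ K]
    (t : List A → K) (n₁ m k₁ k₂ : ℕ) (hk₁ : k₁ ≤ n₁) (hk₂ : k₂ ≤ m) (w : List A)
    (hw : w.length = n₁ + m + 1) :
    shatM t (succPermW (n₁ - k₁) (m + 1 - k₂))
        ((w.drop k₁).take (n₁ - k₁) ++ w.drop (n₁ + k₂)) =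
      ((shuffle ((List.range n₁).drop k₁) (((List.range m).map (· + n₁)).drop k₂)).map
        (fun z => t (applyW z w ++ [w.getD (n₁ + m) default]))).sum := by
  set ψ : ℕ → ℕ := fun e => if e < n₁ - k₁ then e + k₁ else e + (k₁ + k₂) with hψ
  set Q : List A := (w.drop k₁).take (n₁ - k₁) ++ w.drop (n₁ + k₂) with hQ
  have hClen : ((w.drop k₁).take (n₁ - k₁)).length = n₁ - k₁ := by simp; omega
  have hQlen : Q.length = (n₁ - k₁) + (m - k₂) + 1 := by rw [hQ]; simp; omega
  have hlist1 : (List.range (n₁ - k₁)).map ψ = (List.range n₁).drop k₁ := by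
    apply List.ext_getElem
    · simp
    intro i h1 h2
    simp only [List.length_map, List.length_range] at h1
    simp only [List.getElem_map, List.getElem_range, List.getElem_drop, hψ]
    rw [if_pos h1]
    omega
  have hlist2 : ((List.range (m - k₂)).map (· + (n₁ - k₁))).map ψ =
      ((List.range m).map (· + n₁)).drop k₂ := by
    apply List.ext_getElem
    · simp
    intro i h1 h2
    simp only [List.length_map, List.length_range] at h1
    simp only [List.getElem_map, List.getElem_range, List.getElem_drop, hψ]
    rw [if_neg (by omega)]
    omega
  have hgetQ : ∀ e < (n₁ - k₁) + (m - k₂), Q.getD e default = w.getD (ψ e) default := by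
    intro e he
    by_cases hc : e < n₁ - k₁
    · rw [hQ, getD_append_left _ _ _ _ (by rw [hClen]; omega),
        getD_take _ _ _ _ hc, getD_drop, hψ]
      simp only []
      rw [if_pos hc]
      congr 1
      omega
    · rw [hQ, getD_append_right _ _ _ _ (by rw [hClen]; omega), hClen, getD_drop, hψ]
      simp only []
      rw [if_neg hc]
      congr 1
      omega
  rw [show m + 1 - k₂ = (m - k₂) + 1 by omega, succPermW_eq]
  unfold shatM
  rw [Multiset.map_map]
  rw [show ((shuffle ((List.range n₁).drop k₁) (((List.range m).map (· + n₁)).drop k₂)) =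
      (shuffle (List.range (n₁ - k₁)) ((List.range (m - k₂)).map (· + (n₁ - k₁)))).map
        (List.map ψ)) from by rw [shuffle_map, hlist1, hlist2]]
  rw [Multiset.map_map]
  apply congrArg
  apply Multiset.map_congr rfl
  intro x hx
  have hxl : x.length = (n₁ - k₁) + (m - k₂) := by simpa using length_of_mem_shuffle hx
  simp only [Function.comp_apply]
  rw [if_pos (by rw [hQlen]; simp [hxl])]
  congr 1
  rw [applyW_append]
  congr 1
  · rw [applyW_congr x ψ w Q]
    intro e he
    have hmem : e ∈ List.range (n₁ - k₁) ++ (List.range (m - k₂)).map (· + (n₁ - k₁)) :=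
      ((mem_shuffle_perm _ _ x hx).mem_iff).1 he
    have he2 : e < (n₁ - k₁) + (m - k₂) := by
      simp only [List.mem_append, List.mem_range, List.mem_map] at hmem
      rcases hmem with h | ⟨i, hi, rfl⟩ <;> omega
    exact hgetQ e he2
  · show [Q.getD (n₁ - k₁ + (m - k₂)) default] = [w.getD (n₁ + m) default]
    congr 1
    rw [hQ, getD_append_right _ _ _ _ (by rw [hClen]; omega), hClen, getD_drop]
    congr 1
    omega


theorem rhs_term_eq {A : Type*} [Inhabited A] {K : Type*} [CommRing K] [Algebra ℚ K]
    (s t : List A → K) (n₁ m k₁ k₂ : ℕ) (hk₁ : k₁ ≤ n₁) (hk₂ : k₂ ≤ m) (w : List A)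
    (hw : w.length = n₁ + m + 1) :
    actSeries (blockSwap k₁ k₂ (n₁ - k₁) (n₁ + (m + 1)))
      (concSeries (shatM s (mrW (List.range k₁) (List.range k₂)))
        (shatM t (succPermW (n₁ - k₁) (m + 1 - k₂)))) w =
      ((shuffle ((List.range n₁).take k₁) (((List.range m).map (· + n₁)).take k₂)).map
        (fun y => s (applyW y w))).sum *
      ((shuffle ((List.range n₁).drop k₁) (((List.range m).map (· + n₁)).drop k₂)).map
        (fun z => t (applyW z w ++ [w.getD (n₁ + m) default]))).sum := by
  have hb : k₁ + (n₁ - k₁) + k₂ ≤ n₁ + (m + 1) := by omega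
  have hb' : k₁ + k₂ + (n₁ - k₁) ≤ n₁ + (m + 1) := by omega
  unfold actSeries
  rw [if_pos (by rw [length_blockSwap _ _ _ _ hb']; omega),
    invWord_blockSwap _ _ _ _ hb',
    applyW_blockSwap k₁ (n₁ - k₁) k₂ (n₁ + (m + 1)) w hb (by omega),
    show k₁ + (n₁ - k₁) = n₁ by omega]
  simp only [concSeries]
  rw [show (w.take k₁ ++ ((w.drop n₁).take k₂ ++ ((w.drop k₁).take (n₁ - k₁) ++
      w.drop (n₁ + k₂)))).length = n₁ + m + 1 from by simp; omega]
  rw [Finset.sum_eq_single (k₁ + k₂) ?hzero ?hmem]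
  case hzero =>
    intro i hi hne
    rw [Finset.mem_range] at hi
    rw [shatM_eq_zero s _ _ (k₁ + k₂) (fun σ h => length_mem_mrW h) (by simp; omega), zero_mul]
  case hmem =>
    intro h
    exact absurd (Finset.mem_range.mpr (by omega)) h
  rw [show w.take k₁ ++ ((w.drop n₁).take k₂ ++ ((w.drop k₁).take (n₁ - k₁) ++ w.drop (n₁ + k₂)))
      = (w.take k₁ ++ (w.drop n₁).take k₂) ++ ((w.drop k₁).take (n₁ - k₁) ++ w.drop (n₁ + k₂))
      from by rw [List.append_assoc],
    List.take_left' (by simp; omega), List.drop_left' (by simp; omega),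
    g_eq s n₁ m k₁ k₂ hk₁ hk₂ w hw, h_eq t n₁ m k₁ k₂ hk₁ hk₂ w hw]

/-- change of variables for abstract iterated integrals: for group-like
`s, t` and `n₁ ≥ 0`, `n₂ ≥ 1`,
`(st)^(1_{n₁} ≻ 1_{n₂}) − ŝ(1_{n₁} ≻ 1_{n₂})
  = Σ_{k₁=0}^{n₁} Σ_{k₂=0}^{n₂−1} ρ_{k₂,n₁−k₁} · conc(ŝ(1_{k₁} *′ 1_{k₂}) ⊗ t̂(1_{n₁−k₁} ≻ 1_{n₂−k₂}))`. -/
theorem change_of_variables_abstract_iterated_integrals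
    {A : Type*} [Inhabited A] {K : Type*} [CommRing K] [Algebra ℚ K]
    (s t : List A → K) (hs : GroupLikeSeries s) (ht : GroupLikeSeries t)
    (n₁ n₂ : ℕ) (hn₂ : 1 ≤ n₂) (w : List A) :
    shatM (concSeries s t) (succPermW n₁ n₂) w - shatM s (succPermW n₁ n₂) w =
      ∑ k₁ ∈ Finset.range (n₁ + 1), ∑ k₂ ∈ Finset.range n₂,
        actSeries (blockSwap k₁ k₂ (n₁ - k₁) (n₁ + n₂))
          (concSeries (shatM s (mrW (List.range k₁) (List.range k₂)))
            (shatM t (succPermW (n₁ - k₁) (n₂ - k₂)))) w := by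
  obtain ⟨m, rfl⟩ : ∃ m, n₂ = m + 1 := ⟨n₂ - 1, by omega⟩
  by_cases hw : w.length = n₁ + m + 1
  · rw [lhs_eq s t ht.1 n₁ m w hw]
    apply Finset.sum_congr rfl
    intro k₁ hk₁
    apply Finset.sum_congr rfl
    intro k₂ hk₂
    rw [Finset.mem_range] at hk₁ hk₂
    exact (rhs_term_eq s t n₁ m k₁ k₂ (by omega) (by omega) w hw).symm
  · rw [shatM_eq_zero _ _ _ (n₁ + m + 1) (fun σ h => length_mem_succPermW h) hw,
      shatM_eq_zero _ _ _ (n₁ + m + 1) (fun σ h => length_mem_succPermW h) hw, sub_self]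
    symm
    apply Finset.sum_eq_zero
    intro k₁ hk₁
    apply Finset.sum_eq_zero
    intro k₂ hk₂
    rw [Finset.mem_range] at hk₁ hk₂
    unfold actSeries
    rw [if_neg]
    rw [length_blockSwap _ _ _ _ (by omega)]
    omega
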